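/- Let G_γ^odd(x,y) = (1/(2γ))(e^{-γ|x-y|} - e^{-γ|x+y|}) for x, y ≥ 0 and Re γ > 0. Then there exists C > 0 such that for any integrable odd function f with ∫_ℝ (1+y²)^{1/2}|f(y)| dy < ∞, the function u(x) = ∫₀^∞ G_γ^odd(x,y) f(y) dy satisfies ∫_ℝ |u(x)| dx ≤ (C/|γ|) ∫_ℝ (1+y²)^{1/2} |f(y)| dy, for all γ with Re γ ≥ (1/2)|Im γ|. -/

import Mathlib

open MeasureTheory
open Set

/-- Green's function of `(∂ₓₓ - γ²)⁻¹` on odd functions, for `x, y ≥ 0`. -/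
noncomputable def Godd (γ : ℂ) (x y : ℝ) : ℂ :=
  (1 / (2 * γ)) * (Complex.exp (-γ * (|x - y| : ℝ)) - Complex.exp (-γ * (|x + y| : ℝ)))

lemma exp_abs_integrableOn_Ioi {r : ℝ} (hr : 0 < r) :
    IntegrableOn (fun x : ℝ => Real.exp (-(r * |x|))) (Set.Ioi 0) :=
  (exp_neg_integrableOn_Ioi 0 hr).congr_fun
    (fun x hx => by rw [abs_of_pos hx]; ring_nf) measurableSet_Ioi

lemma integrable_exp_neg_mul_abs {r : ℝ} (hr : 0 < r) :
    Integrable (fun x : ℝ => Real.exp (-(r * |x|))) := by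
  have hIoi := exp_abs_integrableOn_Ioi hr
  have hIic : IntegrableOn (fun x : ℝ => Real.exp (-(r * |x|))) (Set.Iic 0) := by
    rw [← Measure.map_neg_eq_self (volume : Measure ℝ)]
    have m : MeasurableEmbedding fun x : ℝ => -x := (Homeomorph.neg ℝ).measurableEmbedding
    rw [m.integrableOn_map_iff]
    simp_rw [Function.comp_def, abs_neg, neg_preimage, neg_Iic, neg_zero]
    exact Iff.mpr integrableOn_Ici_iff_integrableOn_Ioi hIoi
  rw [← integrableOn_univ, ← Set.Iic_union_Ioi (a := (0:ℝ))]
  exact hIic.union hIoi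

lemma integral_exp_neg_mul_abs {r : ℝ} (hr : 0 < r) :
    ∫ x : ℝ, Real.exp (-(r * |x|)) = 2 / r := by
  rw [integral_comp_abs (f := fun t : ℝ => Real.exp (-(r * t)))]
  have h2 := integral_comp_mul_left_Ioi (fun x : ℝ => Real.exp (-x)) 0 hr
  simp only [mul_zero, integral_exp_neg_Ioi_zero, smul_eq_mul, mul_one] at h2
  rw [h2, div_eq_mul_inv]

lemma integrable_exp_sub {r : ℝ} (hr : 0 < r) (a : ℝ) :
    Integrable (fun x : ℝ => Real.exp (-(r * |x - a|))) :=
  (integrable_exp_neg_mul_abs hr).comp_sub_right a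

lemma integrable_exp_add {r : ℝ} (hr : 0 < r) (a : ℝ) :
    Integrable (fun x : ℝ => Real.exp (-(r * |x + a|))) :=
  (integrable_exp_neg_mul_abs hr).comp_add_right a

lemma integral_exp_sub {r : ℝ} (hr : 0 < r) (a : ℝ) :
    ∫ x : ℝ, Real.exp (-(r * |x - a|)) = 2 / r := by
  rw [integral_sub_right_eq_self (fun x : ℝ => Real.exp (-(r * |x|))) a]
  exact integral_exp_neg_mul_abs hr

lemma integral_exp_add {r : ℝ} (hr : 0 < r) (a : ℝ) :
    ∫ x : ℝ, Real.exp (-(r * |x + a|)) = 2 / r := by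
  rw [integral_add_right_eq_self (fun x : ℝ => Real.exp (-(r * |x|))) a]
  exact integral_exp_neg_mul_abs hr


lemma exp_diff_le {γ : ℂ} (hγ : γ ≠ 0) (hre : 0 < γ.re) {a b : ℝ} (hab : a ≤ b) :
    ‖Complex.exp (-γ * a) - Complex.exp (-γ * b)‖ ≤
      ‖γ‖ * (b - a) * Real.exp (-(γ.re * a)) := by
  have key : Complex.exp (-γ * b) - Complex.exp (-γ * a)
      = (-γ) * ∫ t in a..b, Complex.exp (-γ * t) := by
    rw [integral_exp_mul_complex (neg_ne_zero.mpr hγ)]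
    field_simp
  have hnorm : ‖∫ t in a..b, Complex.exp (-γ * t)‖ ≤ Real.exp (-(γ.re * a)) * |b - a| := by
    apply intervalIntegral.norm_integral_le_of_norm_le_const
    intro t ht
    rw [Set.uIoc_of_le hab] at ht
    rw [Complex.norm_exp]
    have : (-γ * (t:ℂ)).re = -(γ.re * t) := by simp [Complex.mul_re]
    rw [this]
    exact Real.exp_le_exp.mpr (by nlinarith [ht.1])
  have h1 : ‖Complex.exp (-γ * a) - Complex.exp (-γ * b)‖
      = ‖Complex.exp (-γ * b) - Complex.exp (-γ * a)‖ := by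
    rw [← neg_sub, norm_neg]
  rw [h1, key, norm_mul, norm_neg]
  calc ‖γ‖ * ‖∫ t in a..b, Complex.exp (-γ * t)‖
      ≤ ‖γ‖ * (Real.exp (-(γ.re * a)) * |b - a|) := by
        exact mul_le_mul_of_nonneg_left hnorm (norm_nonneg γ)
    _ = ‖γ‖ * (b - a) * Real.exp (-(γ.re * a)) := by
        rw [abs_of_nonneg (by linarith : (0:ℝ) ≤ b - a)]; ring

lemma kernel_bound {γ : ℂ} (hγ : γ ≠ 0) (hre : 0 < γ.re) (x y : ℝ) (hy : 0 ≤ y) :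
    ‖Godd γ x y‖ ≤
      y * (Real.exp (-(γ.re * |x - y|)) + Real.exp (-(γ.re * |x + y|))) := by
  set a := |x - y| with ha
  set b := |x + y| with hb
  have ea : (0:ℝ) < Real.exp (-(γ.re * a)) := Real.exp_pos _
  have eb : (0:ℝ) < Real.exp (-(γ.re * b)) := Real.exp_pos _
  have habs : |a - b| ≤ 2 * y := by
    calc |a - b| ≤ |(x - y) - (x + y)| := abs_abs_sub_abs_le_abs_sub _ _
      _ = 2 * y := by
          rw [show (x - y) - (x + y) = -(2 * y) by ring, abs_neg,
            abs_of_nonneg (by linarith)]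
  have main : ‖Complex.exp (-γ * a) - Complex.exp (-γ * b)‖ ≤
      ‖γ‖ * (2 * y) *
        (Real.exp (-(γ.re * a)) + Real.exp (-(γ.re * b))) := by
    rcases le_total a b with h | h
    · calc ‖Complex.exp (-γ * a) - Complex.exp (-γ * b)‖
          ≤ ‖γ‖ * (b - a) * Real.exp (-(γ.re * a)) := exp_diff_le hγ hre h
        _ ≤ ‖γ‖ * (2 * y) *
            (Real.exp (-(γ.re * a)) + Real.exp (-(γ.re * b))) := by
            have hba : b - a ≤ 2 * y := by
              have := habs; rw [abs_sub_comm, abs_of_nonneg (by linarith)] at this; linarith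
            gcongr
            · linarith
    · have h1 : ‖Complex.exp (-γ * a) - Complex.exp (-γ * b)‖
          = ‖Complex.exp (-γ * b) - Complex.exp (-γ * a)‖ := by
        rw [← neg_sub, norm_neg]
      rw [h1]
      calc ‖Complex.exp (-γ * b) - Complex.exp (-γ * a)‖
          ≤ ‖γ‖ * (a - b) * Real.exp (-(γ.re * b)) := exp_diff_le hγ hre h
        _ ≤ ‖γ‖ * (2 * y) *
            (Real.exp (-(γ.re * a)) + Real.exp (-(γ.re * b))) := by
            have hba : a - b ≤ 2 * y := by
              rw [abs_of_nonneg (by linarith)] at habs; linarith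
            gcongr
            · linarith
  have habs2 : ‖1 / (2 * γ)‖ = 1 / (2 * ‖γ‖) := by
    rw [norm_div, norm_one, norm_mul, Complex.norm_two]
  have hγpos : 0 < ‖γ‖ := norm_pos_iff.mpr hγ
  rw [Godd, norm_mul, habs2]
  rw [div_mul_eq_mul_div, one_mul, div_le_iff₀ (by positivity)]
  calc ‖Complex.exp (-γ * a) - Complex.exp (-γ * b)‖
      ≤ ‖γ‖ * (2 * y) *
        (Real.exp (-(γ.re * a)) + Real.exp (-(γ.re * b))) := main
    _ = y * (Real.exp (-(γ.re * a)) + Real.exp (-(γ.re * b))) * (2 * ‖γ‖) := by ring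

noncomputable def Kb (r : ℝ) (c : ℝ → ℝ) (x y : ℝ) : ℝ :=
  y * (Real.exp (-(r * |x - y|)) + Real.exp (-(r * |x + y|))) * c y

lemma Kb_nonneg {r : ℝ} {c : ℝ → ℝ} (hc : ∀ y, 0 ≤ c y) (x y : ℝ) (hy : 0 ≤ y) :
    0 ≤ Kb r c x y :=
  mul_nonneg (mul_nonneg hy (by positivity)) (hc y)

lemma Kb_integrable_x {r : ℝ} (hr : 0 < r) (c : ℝ → ℝ) (y : ℝ) :
    Integrable (fun x => Kb r c x y) := by
  have h : (fun x => Kb r c x y) = fun x =>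
      (y * c y) * (Real.exp (-(r * |x - y|)) + Real.exp (-(r * |x + y|))) := by
    funext x; unfold Kb; ring
  rw [h]
  exact ((integrable_exp_sub hr y).add (integrable_exp_add hr y)).const_mul _

lemma Kb_integral_x {r : ℝ} (hr : 0 < r) (c : ℝ → ℝ) (y : ℝ) :
    ∫ x : ℝ, Kb r c x y = (4 / r) * (y * c y) := by
  have h : (fun x => Kb r c x y) = fun x =>
      (y * c y) * (Real.exp (-(r * |x - y|)) + Real.exp (-(r * |x + y|))) := by
    funext x; unfold Kb; ring
  rw [h, integral_const_mul, integral_add (integrable_exp_sub hr y) (integrable_exp_add hr y),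
    integral_exp_sub hr y, integral_exp_add hr y]
  field_simp
  ring

theorem stmt_4 :
    ∃ C > (0:ℝ), ∀ γ : ℂ, γ ≠ 0 → (1 / 2) * |γ.im| ≤ γ.re →
      ∀ f : ℝ → ℂ, (∀ y, f (-y) = -f y) → Integrable f →
        Integrable (fun y => Real.sqrt (1 + y ^ 2) * ‖f y‖) →
        (∫ x : ℝ, ‖∫ y in Set.Ioi (0:ℝ), Godd γ x y * f y‖) ≤
          (C / ‖γ‖) * ∫ y : ℝ, Real.sqrt (1 + y ^ 2) * ‖f y‖ := by
  refine ⟨12, by norm_num, ?_⟩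
  intro γ hγ him f hodd hf hfw
  have hr : 0 < γ.re := by
    rcases (le_trans (by positivity) him : (0:ℝ) ≤ γ.re).lt_or_eq with h | h
    · exact h
    · exfalso
      apply hγ
      have h1 : |γ.im| ≤ 0 := by rw [← h] at him; linarith [abs_nonneg γ.im]
      have h2 : γ.im = 0 := abs_nonpos_iff.mp h1
      exact Complex.ext (by simp [← h]) (by simp [h2])
  set r := γ.re with hrdef
  have hγabs : 0 < ‖γ‖ := norm_pos_iff.mpr hγ
  have habs3 : ‖γ‖ ≤ 3 * r := by
    have h1 := Complex.norm_le_abs_re_add_abs_im γ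
    have h2 : |γ.re| = r := abs_of_pos hr
    have h3 : |γ.im| ≤ 2 * r := by linarith
    linarith
  set c : ℝ → ℝ := fun y => ‖f y‖ with hc
  have hc_nonneg : ∀ y, 0 ≤ c y := fun y => norm_nonneg _
  have hc_meas : AEStronglyMeasurable c volume := by
    have := hf.aestronglyMeasurable.norm
    exact this
  have hB_nonneg : ∀ y : ℝ, 0 ≤ Real.sqrt (1 + y ^ 2) * c y :=
    fun y => mul_nonneg (Real.sqrt_nonneg _) (hc_nonneg y)
  have hyB : ∀ y : ℝ, 0 ≤ y → y ≤ Real.sqrt (1 + y ^ 2) := by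
    intro y hy
    rw [show y = Real.sqrt (y ^ 2) by rw [Real.sqrt_sq hy]]
    exact Real.sqrt_le_sqrt (by nlinarith [Real.sq_sqrt (by positivity : (0:ℝ) ≤ y^2)])
  set ν : Measure ℝ := volume.restrict (Set.Ioi (0:ℝ)) with hν
  -- measurability on the product
  have hcont : Continuous fun p : ℝ × ℝ =>
      p.2 * (Real.exp (-(r * |p.1 - p.2|)) + Real.exp (-(r * |p.1 + p.2|))) := by
    fun_prop
  have hF_aesm : AEStronglyMeasurable (fun p : ℝ × ℝ => Kb r c p.1 p.2)
      ((volume : Measure ℝ).prod ν) := by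
    have h1 : AEStronglyMeasurable (fun p : ℝ × ℝ => c p.2)
        ((volume : Measure ℝ).prod ν) := (hc_meas.restrict).comp_snd
    exact hcont.aestronglyMeasurable.mul h1
  -- integrability on the product
  have hF : Integrable (fun p : ℝ × ℝ => Kb r c p.1 p.2) ((volume : Measure ℝ).prod ν) := by
    refine (integrable_prod_iff' hF_aesm).mpr ⟨?_, ?_⟩
    · exact Filter.Eventually.of_forall fun y => Kb_integrable_x hr c y
    · have heq : ∀ᵐ y ∂ν, (4 / r) * (y * c y) = ∫ x, ‖Kb r c x y‖ := by
        filter_upwards [ae_restrict_mem measurableSet_Ioi] with y hy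
        have hnn : ∀ x, ‖Kb r c x y‖ = Kb r c x y := fun x =>
          Real.norm_of_nonneg (Kb_nonneg hc_nonneg x y (le_of_lt hy))
        simp_rw [hnn]
        exact (Kb_integral_x hr c y).symm
      refine Integrable.congr ?_ heq
      refine Integrable.mono' ((hfw.restrict (s := Set.Ioi 0)).const_mul (4 / r)) ?_ ?_
      · exact ((aestronglyMeasurable_id.mul hc_meas).const_mul (4 / r)).restrict
      · filter_upwards [ae_restrict_mem measurableSet_Ioi] with y hy
        have h1 : y ≤ Real.sqrt (1 + y ^ 2) := hyB y (le_of_lt hy)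
        have h2 : 0 ≤ (4 / r) * (y * c y) :=
          mul_nonneg (by positivity) (mul_nonneg (le_of_lt hy) (hc_nonneg y))
        rw [Real.norm_of_nonneg h2]
        have : y * c y ≤ Real.sqrt (1 + y ^ 2) * c y :=
          mul_le_mul_of_nonneg_right h1 (hc_nonneg y)
        have h4r : (0:ℝ) ≤ 4 / r := by positivity
        calc (4 / r) * (y * c y) ≤ (4 / r) * (Real.sqrt (1 + y ^ 2) * c y) := by
              exact mul_le_mul_of_nonneg_left this h4r
          _ = 4 / r * (Real.sqrt (1 + y ^ 2) * c y) := rfl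
  -- pointwise bound for the inner integral
  have stepA : ∀ x : ℝ, ‖∫ y in Set.Ioi (0:ℝ), Godd γ x y * f y‖ ≤
      ∫ y, Kb r c x y ∂ν := by
    intro x
    have hKint : Integrable (fun y => Kb r c x y) ν := by
      refine Integrable.mono' ((hfw.restrict (s := Set.Ioi 0)).const_mul 2) ?_ ?_
      · have hcx : Continuous fun y : ℝ =>
            y * (Real.exp (-(r * |x - y|)) + Real.exp (-(r * |x + y|))) := by fun_prop
        exact (hcx.aestronglyMeasurable.mul hc_meas).restrict
      · filter_upwards [ae_restrict_mem measurableSet_Ioi] with y hy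
        rw [Real.norm_of_nonneg (Kb_nonneg hc_nonneg x y (le_of_lt hy))]
        have e1 : Real.exp (-(r * |x - y|)) ≤ 1 :=
          Real.exp_le_one_iff.mpr (neg_nonpos.mpr (by positivity))
        have e2 : Real.exp (-(r * |x + y|)) ≤ 1 :=
          Real.exp_le_one_iff.mpr (neg_nonpos.mpr (by positivity))
        have h1 : y ≤ Real.sqrt (1 + y ^ 2) := hyB y (le_of_lt hy)
        unfold Kb
        calc y * (Real.exp (-(r * |x - y|)) + Real.exp (-(r * |x + y|))) * c y
            ≤ y * 2 * c y := by
              refine mul_le_mul_of_nonneg_right ?_ (hc_nonneg y)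
              exact mul_le_mul_of_nonneg_left (by linarith) (le_of_lt hy)
          _ ≤ Real.sqrt (1 + y ^ 2) * 2 * c y := by nlinarith [hc_nonneg y]
          _ = 2 * (Real.sqrt (1 + y ^ 2) * c y) := by ring
    calc ‖∫ y in Set.Ioi (0:ℝ), Godd γ x y * f y‖
        = ‖∫ y in Set.Ioi (0:ℝ), Godd γ x y * f y‖ := rfl
      _ ≤ ∫ y in Set.Ioi (0:ℝ), ‖Godd γ x y * f y‖ := norm_integral_le_integral_norm _
      _ ≤ ∫ y, Kb r c x y ∂ν := by
          refine integral_mono_of_nonneg ?_ hKint ?_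
          · exact Filter.Eventually.of_forall fun y => norm_nonneg _
          · filter_upwards [ae_restrict_mem measurableSet_Ioi] with y hy
            have hb := kernel_bound hγ hr x y (le_of_lt hy)
            calc ‖Godd γ x y * f y‖ = ‖Godd γ x y‖ * c y := by
                  rw [norm_mul]
              _ ≤ (y * (Real.exp (-(r * |x - y|)) + Real.exp (-(r * |x + y|)))) * c y :=
                  mul_le_mul_of_nonneg_right hb (hc_nonneg y)
              _ = Kb r c x y := rfl
  -- integrability of the x-marginal
  have hh : Integrable (fun x => ∫ y, Kb r c x y ∂ν) volume := hF.integral_prod_left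
  -- final chain
  have hBint_nonneg : 0 ≤ ∫ y : ℝ, Real.sqrt (1 + y ^ 2) * c y :=
    integral_nonneg hB_nonneg
  calc (∫ x : ℝ, ‖∫ y in Set.Ioi (0:ℝ), Godd γ x y * f y‖)
      ≤ ∫ x : ℝ, ∫ y, Kb r c x y ∂ν := by
        refine integral_mono_of_nonneg ?_ hh ?_
        · exact Filter.Eventually.of_forall fun x => norm_nonneg _
        · exact Filter.Eventually.of_forall stepA
    _ = ∫ y, ∫ x : ℝ, Kb r c x y ∂volume ∂ν := integral_integral_swap hF
    _ = ∫ y, (4 / r) * (y * c y) ∂ν := by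
        refine integral_congr_ae (Filter.Eventually.of_forall fun y => Kb_integral_x hr c y)
    _ ≤ ∫ y, (4 / r) * (Real.sqrt (1 + y ^ 2) * c y) ∂ν := by
        refine integral_mono_of_nonneg ?_ ((hfw.restrict (s := Set.Ioi 0)).const_mul (4 / r)) ?_
        · filter_upwards [ae_restrict_mem measurableSet_Ioi] with y hy
          exact mul_nonneg (by positivity) (mul_nonneg (le_of_lt hy) (hc_nonneg y))
        · filter_upwards [ae_restrict_mem measurableSet_Ioi] with y hy
          exact mul_le_mul_of_nonneg_left
            (mul_le_mul_of_nonneg_right (hyB y (le_of_lt hy)) (hc_nonneg y)) (by positivity)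
    _ = (4 / r) * ∫ y, Real.sqrt (1 + y ^ 2) * c y ∂ν := integral_const_mul _ _
    _ ≤ (4 / r) * ∫ y : ℝ, Real.sqrt (1 + y ^ 2) * c y := by
        refine mul_le_mul_of_nonneg_left ?_ (by positivity)
        exact setIntegral_le_integral hfw
          (Filter.Eventually.of_forall fun y => hB_nonneg y)
    _ ≤ ((12:ℝ) / ‖γ‖) * ∫ y : ℝ, Real.sqrt (1 + y ^ 2) * c y := by
        refine mul_le_mul_of_nonneg_right ?_ hBint_nonneg
        rw [div_le_div_iff₀ (by positivity) hγabs]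
        nlinarith
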